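/- A point (β,α_1,α_2) ∈ M⁰ is a critical point of S restricted to M⁰ if and only if x = α_2/β is a multiple root of the cubic P, i.e. P(α_2/β) = 0 and P′(α_2/β) = 0. -/

import Mathlib

open ContinuousLinearMap in
lemma aux_fderiv (k1 k2 k3 k4 k5 β α₁ α₂ : ℝ) (hβ : β ≠ 0) (h1 : α₁ ≠ 0) (h2 : α₂ ≠ 0)
    (v : ℝ × ℝ × ℝ) :
    fderiv ℝ (fun q : ℝ × ℝ × ℝ =>
        (k1 * q.2.1 + k2 * q.2.2) * (q.1 * q.1)⁻¹ + k3 * q.1⁻¹ + k4 * q.2.1⁻¹ + k5 * q.2.2⁻¹)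
      (β, α₁, α₂) v
    = (-(2 * (k1 * α₁ + k2 * α₂) / β ^ 3) - k3 / β ^ 2) * v.1
      + (k1 / β ^ 2 - k4 / α₁ ^ 2) * v.2.1
      + (k2 / β ^ 2 - k5 / α₂ ^ 2) * v.2.2 := by
  have c1 : HasFDerivAt (fun q : ℝ × ℝ × ℝ => q.1)
      (fst ℝ ℝ (ℝ × ℝ)) (β, α₁, α₂) := hasFDerivAt_fst
  have c21 : HasFDerivAt (fun q : ℝ × ℝ × ℝ => q.2.1)
      ((fst ℝ ℝ ℝ).comp (snd ℝ ℝ (ℝ × ℝ))) (β, α₁, α₂) := by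
    exact hasFDerivAt_fst.comp (β, α₁, α₂) hasFDerivAt_snd
  have c22 : HasFDerivAt (fun q : ℝ × ℝ × ℝ => q.2.2)
      ((snd ℝ ℝ ℝ).comp (snd ℝ ℝ (ℝ × ℝ))) (β, α₁, α₂) := by
    exact hasFDerivAt_snd.comp (β, α₁, α₂) hasFDerivAt_snd
  have hlin : HasFDerivAt (fun q : ℝ × ℝ × ℝ => k1 * q.2.1 + k2 * q.2.2)
      (k1 • ((fst ℝ ℝ ℝ).comp (snd ℝ ℝ (ℝ × ℝ))) + k2 • ((snd ℝ ℝ ℝ).comp (snd ℝ ℝ (ℝ × ℝ))))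
      (β, α₁, α₂) := by
    exact (c21.const_mul k1).add (c22.const_mul k2)
  have hsq : HasFDerivAt (fun q : ℝ × ℝ × ℝ => q.1 * q.1)
      (β • fst ℝ ℝ (ℝ × ℝ) + β • fst ℝ ℝ (ℝ × ℝ)) (β, α₁, α₂) := by
    exact c1.mul c1
  have hisq : HasFDerivAt (fun q : ℝ × ℝ × ℝ => (q.1 * q.1)⁻¹)
      (((1 : ℝ →L[ℝ] ℝ).smulRight (-((β * β) ^ 2)⁻¹)).comp
        (β • fst ℝ ℝ (ℝ × ℝ) + β • fst ℝ ℝ (ℝ × ℝ))) (β, α₁, α₂) := by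
    exact (hasFDerivAt_inv (mul_ne_zero hβ hβ)).comp (β, α₁, α₂) hsq
  have hi1 : HasFDerivAt (fun q : ℝ × ℝ × ℝ => q.1⁻¹)
      (((1 : ℝ →L[ℝ] ℝ).smulRight (-(β ^ 2)⁻¹)).comp (fst ℝ ℝ (ℝ × ℝ))) (β, α₁, α₂) := by
    exact (hasFDerivAt_inv hβ).comp (β, α₁, α₂) c1
  have hi2 : HasFDerivAt (fun q : ℝ × ℝ × ℝ => q.2.1⁻¹)
      (((1 : ℝ →L[ℝ] ℝ).smulRight (-(α₁ ^ 2)⁻¹)).comp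
        ((fst ℝ ℝ ℝ).comp (snd ℝ ℝ (ℝ × ℝ)))) (β, α₁, α₂) := by
    exact (hasFDerivAt_inv h1).comp (β, α₁, α₂) c21
  have hi3 : HasFDerivAt (fun q : ℝ × ℝ × ℝ => q.2.2⁻¹)
      (((1 : ℝ →L[ℝ] ℝ).smulRight (-(α₂ ^ 2)⁻¹)).comp
        ((snd ℝ ℝ ℝ).comp (snd ℝ ℝ (ℝ × ℝ)))) (β, α₁, α₂) := by
    exact (hasFDerivAt_inv h2).comp (β, α₁, α₂) c22
  have total : HasFDerivAt (fun q : ℝ × ℝ × ℝ =>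
      (k1 * q.2.1 + k2 * q.2.2) * (q.1 * q.1)⁻¹ + k3 * q.1⁻¹ + k4 * q.2.1⁻¹ + k5 * q.2.2⁻¹)
      ((((k1 * α₁ + k2 * α₂) • (((1 : ℝ →L[ℝ] ℝ).smulRight (-((β * β) ^ 2)⁻¹)).comp
          (β • fst ℝ ℝ (ℝ × ℝ) + β • fst ℝ ℝ (ℝ × ℝ)))
        + ((β * β)⁻¹) • (k1 • ((fst ℝ ℝ ℝ).comp (snd ℝ ℝ (ℝ × ℝ)))
            + k2 • ((snd ℝ ℝ ℝ).comp (snd ℝ ℝ (ℝ × ℝ))))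
        + k3 • (((1 : ℝ →L[ℝ] ℝ).smulRight (-(β ^ 2)⁻¹)).comp (fst ℝ ℝ (ℝ × ℝ))))
        + k4 • (((1 : ℝ →L[ℝ] ℝ).smulRight (-(α₁ ^ 2)⁻¹)).comp
            ((fst ℝ ℝ ℝ).comp (snd ℝ ℝ (ℝ × ℝ)))))
        + k5 • (((1 : ℝ →L[ℝ] ℝ).smulRight (-(α₂ ^ 2)⁻¹)).comp
            ((snd ℝ ℝ ℝ).comp (snd ℝ ℝ (ℝ × ℝ))))) (β, α₁, α₂) := by
    exact (((hlin.mul hisq).add (hi1.const_mul k3)).add (hi2.const_mul k4)).add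
      (hi3.const_mul k5)
  rw [total.fderiv]
  simp only [ContinuousLinearMap.add_apply, ContinuousLinearMap.coe_smul', Pi.smul_apply,
    ContinuousLinearMap.coe_comp', Function.comp_apply, ContinuousLinearMap.smulRight_apply,
    ContinuousLinearMap.one_apply, ContinuousLinearMap.coe_fst', ContinuousLinearMap.coe_snd',
    smul_eq_mul]
  field_simp
  ring

set_option maxHeartbeats 1600000 in
/-- Lemma 5.9: a point `(β,α₁,α₂) ∈ M⁰` is a critical point of `S|_{M⁰}` if and only if
`x = α₂/β` is a multiple root of the cubic `P`. -/
theorem stmt_11 (d₁ d₂ : ℕ) (hd₁ : 0 < d₁) (hd₂ : 0 < d₂)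
    (κ₁ κ₂ : ℝ) (hκ₁0 : 0 ≤ κ₁) (hκ₁1 : κ₁ < 1) (hκ₂0 : 0 ≤ κ₂) (hκ₂1 : κ₂ < 1)
    (n : ℝ) (hn : n = 2 * ((d₁ : ℝ) * (1 - κ₁) + (d₂ : ℝ) * (1 - κ₂)))
    (Tp T₁ T₂ : ℝ) (hTp : 0 < Tp) (hT₁ : 0 < T₁) (hT₂ : 0 < T₂)
    (S F : ℝ × ℝ × ℝ → ℝ)
    (hS : ∀ p, S p = -(1/4) * ((d₁ : ℝ) * (1 - κ₁) * p.2.1 + (d₂ : ℝ) * (1 - κ₂) * p.2.2) / p.1^2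
        - n / (2 * p.1) + (1/4) * ((d₁ : ℝ) * κ₁ / p.2.1 + (d₂ : ℝ) * κ₂ / p.2.2))
    (hF : ∀ p, F p = -n * Tp / p.1 + (d₁ : ℝ) * T₁ / p.2.1 + (d₂ : ℝ) * T₂ / p.2.2)
    (M0 : Set (ℝ × ℝ × ℝ))
    (hM0 : M0 = {p | 0 < p.1 ∧ 0 < p.2.1 ∧ 0 < p.2.2 ∧ F p = 0})
    (a b c d : ℝ)
    (ha : a = n * (d₂ : ℝ) * (1 - κ₂) * Tp)
    (hb : b = (d₁ : ℝ)^2 * (1 - κ₁) * T₁ - (d₂ : ℝ)^2 * (1 - κ₂) * T₂ + 2 * n^2 * Tp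
        - n^2 * κ₁ * Tp^2 / T₁)
    (hc : c = -(2 * n * (d₂ : ℝ) * T₂) + 2 * n * (d₂ : ℝ) * κ₁ * Tp * T₂ / T₁
        - n * (d₂ : ℝ) * κ₂ * Tp)
    (hd : d = -((d₂ : ℝ)^2 * κ₁ * T₂^2 / T₁) + κ₂ * (d₂ : ℝ)^2 * T₂)
    (P : ℝ → ℝ) (hP : ∀ x, P x = a * x^3 + b * x^2 + c * x + d)
    (p : ℝ × ℝ × ℝ) (hp : p ∈ M0) :
    (∀ v : ℝ × ℝ × ℝ, fderiv ℝ F p v = 0 → fderiv ℝ S p v = 0)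
      ↔ (P (p.2.2 / p.1) = 0 ∧ deriv P (p.2.2 / p.1) = 0) := by
  rw [hM0] at hp
  obtain ⟨β, α₁, α₂⟩ := p
  obtain ⟨hβ, hα₁, hα₂, hFp⟩ := hp
  replace hβ : 0 < β := hβ
  replace hα₁ : 0 < α₁ := hα₁
  replace hα₂ : 0 < α₂ := hα₂
  replace hFp : -n * Tp / β + (d₁ : ℝ) * T₁ / α₁ + (d₂ : ℝ) * T₂ / α₂ = 0 := by
    rw [hF] at hFp; exact hFp
  have hβ' : β ≠ 0 := ne_of_gt hβ
  have hα₁' : α₁ ≠ 0 := ne_of_gt hα₁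
  have hα₂' : α₂ ≠ 0 := ne_of_gt hα₂
  have hd1R : (0:ℝ) < (d₁ : ℝ) := by exact_mod_cast hd₁
  have hd2R : (0:ℝ) < (d₂ : ℝ) := by exact_mod_cast hd₂
  have h1κ1 : (0:ℝ) < 1 - κ₁ := by linarith
  have h1κ2 : (0:ℝ) < 1 - κ₂ := by linarith
  have hT₁' : T₁ ≠ 0 := ne_of_gt hT₁
  have hn0 : 0 < n := by
    rw [hn]; nlinarith [mul_pos hd1R h1κ1, mul_pos hd2R h1κ2]
  have hn' : n ≠ 0 := ne_of_gt hn0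
  -- the constraint, polynomial form
  have hcon : n * Tp * α₁ * α₂ = (d₁ : ℝ) * T₁ * α₂ * β + (d₂ : ℝ) * T₂ * α₁ * β := by
    field_simp at hFp; linarith
  have hErel : (n * Tp * α₂ - (d₂ : ℝ) * T₂ * β) * α₁ = (d₁ : ℝ) * T₁ * α₂ * β := by
    linear_combination hcon
  have hE : 0 < n * Tp * α₂ - (d₂ : ℝ) * T₂ * β := by
    have h : n * Tp * α₂ - (d₂ : ℝ) * T₂ * β = (d₁ : ℝ) * T₁ * α₂ * β / α₁ := by
      rw [eq_div_iff hα₁']; exact hErel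
    rw [h]; positivity
  have hE' : n * Tp * α₂ - (d₂ : ℝ) * T₂ * β ≠ 0 := ne_of_gt hE
  have hα₁E : α₁ = (d₁ : ℝ) * T₁ * α₂ * β / (n * Tp * α₂ - (d₂ : ℝ) * T₂ * β) := by
    rw [eq_div_iff hE']; linear_combination hErel
  -- closed forms of the two functions
  have hSfun : S = fun q : ℝ × ℝ × ℝ =>
      ((-(1/4) * ((d₁ : ℝ) * (1 - κ₁))) * q.2.1 + (-(1/4) * ((d₂ : ℝ) * (1 - κ₂))) * q.2.2)
        * (q.1 * q.1)⁻¹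
      + (-(n/2)) * q.1⁻¹ + ((1/4) * ((d₁ : ℝ) * κ₁)) * q.2.1⁻¹
      + ((1/4) * ((d₂ : ℝ) * κ₂)) * q.2.2⁻¹ := by
    funext q; rw [hS q]; ring
  have hFfun : F = fun q : ℝ × ℝ × ℝ =>
      ((0 : ℝ) * q.2.1 + (0 : ℝ) * q.2.2) * (q.1 * q.1)⁻¹
      + (-(n * Tp)) * q.1⁻¹ + ((d₁ : ℝ) * T₁) * q.2.1⁻¹ + ((d₂ : ℝ) * T₂) * q.2.2⁻¹ := by
    funext q; rw [hF q]; ring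
  -- the differentials
  have hSv : ∀ v : ℝ × ℝ × ℝ, fderiv ℝ S (β, α₁, α₂) v =
      (((d₁ : ℝ) * (1 - κ₁) * α₁ + (d₂ : ℝ) * (1 - κ₂) * α₂) / (2 * β ^ 3) + n / (2 * β ^ 2)) * v.1
      + (-((d₁ : ℝ) * (1 - κ₁) / (4 * β ^ 2)) - (d₁ : ℝ) * κ₁ / (4 * α₁ ^ 2)) * v.2.1
      + (-((d₂ : ℝ) * (1 - κ₂) / (4 * β ^ 2)) - (d₂ : ℝ) * κ₂ / (4 * α₂ ^ 2)) * v.2.2 := by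
    intro v
    rw [hSfun, aux_fderiv _ _ _ _ _ _ _ _ hβ' hα₁' hα₂' v]
    field_simp
    ring
  have hFv : ∀ v : ℝ × ℝ × ℝ, fderiv ℝ F (β, α₁, α₂) v =
      (n * Tp / β ^ 2) * v.1 + (-((d₁ : ℝ) * T₁ / α₁ ^ 2)) * v.2.1
      + (-((d₂ : ℝ) * T₂ / α₂ ^ 2)) * v.2.2 := by
    intro v
    rw [hFfun, aux_fderiv _ _ _ _ _ _ _ _ hβ' hα₁' hα₂' v]
    field_simp
    ring
  -- derivative of the cubic
  have hPfun : P = fun y : ℝ => a * y ^ 3 + (b * y ^ 2 + (c * y + d)) :=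
    funext fun y => by rw [hP y]; ring
  have hQd : HasDerivAt P
      (a * (((3:ℕ) : ℝ) * (α₂ / β) ^ 2) + (b * (((2:ℕ) : ℝ) * (α₂ / β) ^ 1) + c * 1))
      (α₂ / β) := by
    rw [hPfun]
    exact ((hasDerivAt_pow 3 _).const_mul a).add
      (((hasDerivAt_pow 2 _).const_mul b).add (((hasDerivAt_id _).const_mul c).add_const d))
  have hQ : deriv P (α₂ / β) = 3 * a * (α₂ / β) ^ 2 + 2 * b * (α₂ / β) + c := by
    rw [hQd.deriv]; push_cast; ring
  -- restate the goal
  show (∀ v : ℝ × ℝ × ℝ, fderiv ℝ F (β, α₁, α₂) v = 0 → fderiv ℝ S (β, α₁, α₂) v = 0)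
      ↔ (P (α₂ / β) = 0 ∧ deriv P (α₂ / β) = 0)
  rw [hP (α₂ / β), hQ]
  -- abbreviate the partial derivatives
  set Sb : ℝ := ((d₁ : ℝ) * (1 - κ₁) * α₁ + (d₂ : ℝ) * (1 - κ₂) * α₂) / (2 * β ^ 3)
      + n / (2 * β ^ 2) with hSbv
  set S1 : ℝ := -((d₁ : ℝ) * (1 - κ₁) / (4 * β ^ 2)) - (d₁ : ℝ) * κ₁ / (4 * α₁ ^ 2) with hS1v
  set S2 : ℝ := -((d₂ : ℝ) * (1 - κ₂) / (4 * β ^ 2)) - (d₂ : ℝ) * κ₂ / (4 * α₂ ^ 2) with hS2v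
  set Fb : ℝ := n * Tp / β ^ 2 with hFbv
  set F1 : ℝ := -((d₁ : ℝ) * T₁ / α₁ ^ 2) with hF1v
  set F2 : ℝ := -((d₂ : ℝ) * T₂ / α₂ ^ 2) with hF2v
  have hFb0 : Fb ≠ 0 := by rw [hFbv]; positivity
  -- single-fraction forms of the two Lagrange expressions
  have e1 : S1 * Fb - Sb * F1 =
      (2 * β * ((d₁ : ℝ) * T₁) * ((d₁ : ℝ) * (1 - κ₁) * α₁ + (d₂ : ℝ) * (1 - κ₂) * α₂ + n * β)
        - n * Tp * ((d₁ : ℝ) * (1 - κ₁) * α₁ ^ 2 + (d₁ : ℝ) * κ₁ * β ^ 2))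
      / (4 * β ^ 4 * α₁ ^ 2) := by
    rw [hS1v, hSbv, hFbv, hF1v]; field_simp; ring
  have e2 : S2 * Fb - Sb * F2 =
      (2 * β * ((d₂ : ℝ) * T₂) * ((d₁ : ℝ) * (1 - κ₁) * α₁ + (d₂ : ℝ) * (1 - κ₂) * α₂ + n * β)
        - n * Tp * ((d₂ : ℝ) * (1 - κ₂) * α₂ ^ 2 + (d₂ : ℝ) * κ₂ * β ^ 2))
      / (4 * β ^ 4 * α₂ ^ 2) := by
    rw [hS2v, hSbv, hFbv, hF2v]; field_simp; ring
  -- the key polynomial identities (using the constraint through hα₁E)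
  have key1 : (n * Tp * α₂ - (d₂ : ℝ) * T₂ * β) ^ 2 *
      (2 * β * ((d₁ : ℝ) * T₁) * ((d₁ : ℝ) * (1 - κ₁) * α₁ + (d₂ : ℝ) * (1 - κ₂) * α₂ + n * β)
        - n * Tp * ((d₁ : ℝ) * (1 - κ₁) * α₁ ^ 2 + (d₁ : ℝ) * κ₁ * β ^ 2)) =
      -((d₁ : ℝ) * T₁) * β *
        (n * Tp * (a * α₂ ^ 3 + b * α₂ ^ 2 * β + c * α₂ * β ^ 2 + d * β ^ 3)
          - (n * Tp * α₂ - (d₂ : ℝ) * T₂ * β)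
            * (3 * a * α₂ ^ 2 + 2 * b * α₂ * β + c * β ^ 2)) := by
    rw [ha, hb, hc, hd, hα₁E]
    field_simp
    ring
  have key2 : (n * Tp * α₂ - (d₂ : ℝ) * T₂ * β) *
      (2 * β * ((d₂ : ℝ) * T₂) * ((d₁ : ℝ) * (1 - κ₁) * α₁ + (d₂ : ℝ) * (1 - κ₂) * α₂ + n * β)
        - n * Tp * ((d₂ : ℝ) * (1 - κ₂) * α₂ ^ 2 + (d₂ : ℝ) * κ₂ * β ^ 2)) =
      2 * n * Tp * (a * α₂ ^ 3 + b * α₂ ^ 2 * β + c * α₂ * β ^ 2 + d * β ^ 3)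
        - (n * Tp * α₂ - (d₂ : ℝ) * T₂ * β)
          * (3 * a * α₂ ^ 2 + 2 * b * α₂ * β + c * β ^ 2) := by
    rw [ha, hb, hc, hd, hα₁E]
    field_simp
    ring
  -- relate the x = α₂/β forms to the cleared forms
  have ePx : a * (α₂ / β) ^ 3 + b * (α₂ / β) ^ 2 + c * (α₂ / β) + d =
      (a * α₂ ^ 3 + b * α₂ ^ 2 * β + c * α₂ * β ^ 2 + d * β ^ 3) / β ^ 3 := by
    field_simp
  have eQx : 3 * a * (α₂ / β) ^ 2 + 2 * b * (α₂ / β) + c =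
      (3 * a * α₂ ^ 2 + 2 * b * α₂ * β + c * β ^ 2) / β ^ 2 := by
    field_simp
  have hden1 : (4 : ℝ) * β ^ 4 * α₁ ^ 2 ≠ 0 := by positivity
  have hden2 : (4 : ℝ) * β ^ 4 * α₂ ^ 2 ≠ 0 := by positivity
  have hβ3 : (β : ℝ) ^ 3 ≠ 0 := by positivity
  have hβ2 : (β : ℝ) ^ 2 ≠ 0 := by positivity
  have hnTp : (0:ℝ) < n * Tp := mul_pos hn0 hTp
  -- main equivalence of the two scalar conditions with (PB = 0 ∧ QB = 0)
  have iff1 : (S1 * Fb - Sb * F1 = 0 ∧ S2 * Fb - Sb * F2 = 0) ↔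
      ((a * α₂ ^ 3 + b * α₂ ^ 2 * β + c * α₂ * β ^ 2 + d * β ^ 3) = 0 ∧
        (3 * a * α₂ ^ 2 + 2 * b * α₂ * β + c * β ^ 2) = 0) := by
    rw [e1, e2, div_eq_zero_iff, div_eq_zero_iff]
    constructor
    · rintro ⟨h1 | h1, h2 | h2⟩
      · -- both numerators vanish
        have k1 : -((d₁ : ℝ) * T₁) * β *
            (n * Tp * (a * α₂ ^ 3 + b * α₂ ^ 2 * β + c * α₂ * β ^ 2 + d * β ^ 3)
              - (n * Tp * α₂ - (d₂ : ℝ) * T₂ * β)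
                * (3 * a * α₂ ^ 2 + 2 * b * α₂ * β + c * β ^ 2)) = 0 := by
          rw [← key1, h1]; ring
        have k2 : 2 * n * Tp * (a * α₂ ^ 3 + b * α₂ ^ 2 * β + c * α₂ * β ^ 2 + d * β ^ 3)
            - (n * Tp * α₂ - (d₂ : ℝ) * T₂ * β)
              * (3 * a * α₂ ^ 2 + 2 * b * α₂ * β + c * β ^ 2) = 0 := by
          rw [← key2, h2]; ring
        have hpref : -((d₁ : ℝ) * T₁) * β ≠ 0 := by
          refine mul_ne_zero (neg_ne_zero.mpr ?_) hβ'; positivity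
        have k1' : n * Tp * (a * α₂ ^ 3 + b * α₂ ^ 2 * β + c * α₂ * β ^ 2 + d * β ^ 3)
            - (n * Tp * α₂ - (d₂ : ℝ) * T₂ * β)
              * (3 * a * α₂ ^ 2 + 2 * b * α₂ * β + c * β ^ 2) = 0 :=
          (mul_eq_zero.mp k1).resolve_left hpref
        have hPB : a * α₂ ^ 3 + b * α₂ ^ 2 * β + c * α₂ * β ^ 2 + d * β ^ 3 = 0 := by
          have h3 : n * Tp * (a * α₂ ^ 3 + b * α₂ ^ 2 * β + c * α₂ * β ^ 2 + d * β ^ 3) = 0 := by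
            linear_combination k2 - k1'
          exact (mul_eq_zero.mp h3).resolve_left (ne_of_gt hnTp)
        have hQB : 3 * a * α₂ ^ 2 + 2 * b * α₂ * β + c * β ^ 2 = 0 := by
          have h4 : (n * Tp * α₂ - (d₂ : ℝ) * T₂ * β)
              * (3 * a * α₂ ^ 2 + 2 * b * α₂ * β + c * β ^ 2) = 0 := by
            linear_combination n * Tp * hPB - k1'
          exact (mul_eq_zero.mp h4).resolve_left hE'
        exact ⟨hPB, hQB⟩
      · exact absurd h2 hden2
      · exact absurd h1 hden1
      · exact absurd h1 hden1
    · rintro ⟨hPB, hQB⟩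
      constructor
      · left
        have k1 : (n * Tp * α₂ - (d₂ : ℝ) * T₂ * β) ^ 2 *
            (2 * β * ((d₁ : ℝ) * T₁)
                * ((d₁ : ℝ) * (1 - κ₁) * α₁ + (d₂ : ℝ) * (1 - κ₂) * α₂ + n * β)
              - n * Tp * ((d₁ : ℝ) * (1 - κ₁) * α₁ ^ 2 + (d₁ : ℝ) * κ₁ * β ^ 2)) = 0 := by
          rw [key1, hPB, hQB]; ring
        have hE2 : (n * Tp * α₂ - (d₂ : ℝ) * T₂ * β) ^ 2 ≠ 0 := pow_ne_zero _ hE'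
        exact (mul_eq_zero.mp k1).resolve_left hE2
      · left
        have k2 : (n * Tp * α₂ - (d₂ : ℝ) * T₂ * β) *
            (2 * β * ((d₂ : ℝ) * T₂)
                * ((d₁ : ℝ) * (1 - κ₁) * α₁ + (d₂ : ℝ) * (1 - κ₂) * α₂ + n * β)
              - n * Tp * ((d₂ : ℝ) * (1 - κ₂) * α₂ ^ 2 + (d₂ : ℝ) * κ₂ * β ^ 2)) = 0 := by
          rw [key2, hPB, hQB]; ring
        exact (mul_eq_zero.mp k2).resolve_left hE'
  -- now assemble everything
  constructor
  · intro hcrit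
    have h1 : S1 * Fb - Sb * F1 = 0 := by
      have h := hcrit (F1, -Fb, 0) (by rw [hFv]; dsimp only; ring)
      rw [hSv] at h; dsimp only at h
      linear_combination -h
    have h2 : S2 * Fb - Sb * F2 = 0 := by
      have h := hcrit (F2, 0, -Fb) (by rw [hFv]; dsimp only; ring)
      rw [hSv] at h; dsimp only at h
      linear_combination -h
    obtain ⟨hPB, hQB⟩ := iff1.mp ⟨h1, h2⟩
    constructor
    · rw [ePx, hPB]; simp
    · rw [eQx, hQB]; simp
  · rintro ⟨hPx, hQx⟩ v hv
    have hPB : a * α₂ ^ 3 + b * α₂ ^ 2 * β + c * α₂ * β ^ 2 + d * β ^ 3 = 0 := by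
      rw [ePx, div_eq_zero_iff] at hPx
      exact hPx.resolve_right hβ3
    have hQB : 3 * a * α₂ ^ 2 + 2 * b * α₂ * β + c * β ^ 2 = 0 := by
      rw [eQx, div_eq_zero_iff] at hQx
      exact hQx.resolve_right hβ2
    obtain ⟨h1, h2⟩ := iff1.mpr ⟨hPB, hQB⟩
    rw [hFv] at hv
    rw [hSv]
    have key : (Sb * v.1 + S1 * v.2.1 + S2 * v.2.2) * Fb = 0 := by
      linear_combination Sb * hv + v.2.1 * h1 + v.2.2 * h2
    exact (mul_eq_zero.mp key).resolve_right hFb0
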